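/- Let t ≥ 1 and let w_1, …, w_t and w'_1, …, w'_t be strings over {1,2}. Then the string w_1 0 w_2 0 ⋯ 0 w_t 3 w'_t 0 ⋯ 0 w'_2 0 w'_1 belongs to MANYTWINS if and only if e(w_i) = e(w'_i) for every i with 1 ≤ i ≤ t. -/

import Mathlib

/-- `joinZero [w₁, …, w_t] = w₁ 0 w₂ 0 ⋯ 0 w_t`: concatenation with the
separator symbol `0` in between. -/
def joinZero : List (List (Fin 4)) → List (Fin 4)
  | [] => []
  | [w] => w
  | w :: ws => w ++ [0] ++ joinZero ws

/-- `TWIN(t) = { w₁ 0 w₂ 0 ⋯ 0 w_t 3 w_t 0 ⋯ 0 w₂ 0 w₁ : wᵢ ∈ {1,2}^* }`. -/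
def TWIN (t : ℕ) : Set (List (Fin 4)) :=
  {s | ∃ ws : List (List (Fin 4)), ws.length = t ∧
        (∀ w ∈ ws, ∀ a ∈ w, a = 1 ∨ a = 2) ∧
        s = joinZero ws ++ [3] ++ joinZero ws.reverse}

/-- `MANYTWINS = ⋃_{t ≥ 1} TWIN(t)`. -/
def MANYTWINS : Set (List (Fin 4)) :=
  {s | ∃ t : ℕ, 1 ≤ t ∧ s ∈ TWIN t}

/-- Base-3 encoding of a string over `{1,2}` (given as a string over `{0,1,2,3}`
whose symbols are `1` or `2`): `e(ε) = 0` and `e(u·d) = 3·e(u) + d`. -/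
def enc (u : List (Fin 4)) : ℕ :=
  u.foldl (fun acc d => 3 * acc + d.val) 0

lemma enc_snoc (u : List (Fin 4)) (d : Fin 4) :
    enc (u ++ [d]) = 3 * enc u + d.val := by
  simp [enc, List.foldl_append]

lemma val_of_mem12 {d : Fin 4} (h : d = 1 ∨ d = 2) : d.val = 1 ∨ d.val = 2 := by
  rcases h with rfl | rfl <;> simp

lemma enc_inj : ∀ (u v : List (Fin 4)),
    (∀ a ∈ u, a = 1 ∨ a = 2) → (∀ a ∈ v, a = 1 ∨ a = 2) →
    enc u = enc v → u = v := by
  intro u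
  induction u using List.reverseRecOn with
  | nil =>
    intro v _ hv h
    induction v using List.reverseRecOn with
    | nil => rfl
    | append_singleton v d _ =>
      exfalso
      rw [enc_snoc] at h
      have := val_of_mem12 (hv d (by simp))
      simp [enc] at h
      omega
  | append_singleton u d ih =>
    intro v huv hv h
    induction v using List.reverseRecOn with
    | nil =>
      exfalso
      rw [enc_snoc] at h
      have := val_of_mem12 (huv d (by simp))
      simp [enc] at h
      omega
    | append_singleton v e _ =>
      rw [enc_snoc, enc_snoc] at h
      have hd := val_of_mem12 (huv d (by simp))
      have he := val_of_mem12 (hv e (by simp))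
      have h1 : enc u = enc v := by omega
      have h2 : d = e := by
        apply Fin.ext; omega
      have := ih v (fun a ha => huv a (by simp [ha])) (fun a ha => hv a (by simp [ha])) h1
      rw [this, h2]

lemma split_sep (s : Fin 4) : ∀ (a c b d : List (Fin 4)),
    s ∉ a → s ∉ c → a ++ s :: b = c ++ s :: d → a = c ∧ b = d := by
  intro a
  induction a with
  | nil =>
    intro c b d _ hc h
    cases c with
    | nil => simpa using h
    | cons y c =>
      exfalso
      simp only [List.nil_append, List.cons_append, List.cons.injEq] at h
      exact hc (h.1 ▸ List.mem_cons_self)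
  | cons x a ih =>
    intro c b d ha hc h
    cases c with
    | nil =>
      exfalso
      simp only [List.nil_append, List.cons_append, List.cons.injEq] at h
      exact ha (h.1.symm ▸ List.mem_cons_self)
    | cons y c =>
      simp only [List.cons_append, List.cons.injEq] at h
      obtain ⟨rfl, h⟩ := h
      have := ih c b d (fun hm => ha (List.mem_cons_of_mem _ hm))
        (fun hm => hc (List.mem_cons_of_mem _ hm)) h
      exact ⟨by rw [this.1], this.2⟩

lemma joinZero_cons (w : List (Fin 4)) (x : List (Fin 4)) (ws : List (List (Fin 4))) :
    joinZero (w :: x :: ws) = w ++ 0 :: joinZero (x :: ws) := by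
  simp [joinZero]

lemma three_not_mem_joinZero : ∀ ws : List (List (Fin 4)),
    (∀ w ∈ ws, ∀ a ∈ w, a = 1 ∨ a = 2) → (3 : Fin 4) ∉ joinZero ws := by
  intro ws
  induction ws with
  | nil => intro _ h; simp [joinZero] at h
  | cons w ws ih =>
    intro hws h
    cases ws with
    | nil =>
      simp [joinZero] at h
      rcases hws w (by simp) 3 h with h3 | h3 <;> simp at h3
    | cons x ws' =>
      rw [joinZero_cons, List.mem_append, List.mem_cons] at h
      rcases h with h | h | h
      · rcases hws w (by simp) 3 h with h3 | h3 <;> simp at h3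
      · exact absurd h (by decide)
      · exact ih (fun u hu => hws u (by simp [hu])) h

lemma zero_not_mem_of_12 {w : List (Fin 4)} (h : ∀ a ∈ w, a = 1 ∨ a = 2) :
    (0 : Fin 4) ∉ w := by
  intro h0
  rcases h 0 h0 with h1 | h1 <;> simp at h1

lemma joinZero_inj : ∀ ws us : List (List (Fin 4)), ws ≠ [] → us ≠ [] →
    (∀ w ∈ ws, (0 : Fin 4) ∉ w) → (∀ w ∈ us, (0 : Fin 4) ∉ w) →
    joinZero ws = joinZero us → ws = us := by
  intro ws
  induction ws with
  | nil => intro us h; exact absurd rfl h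
  | cons w ws ih =>
    intro us _ hus hw hu heq
    cases us with
    | nil => exact absurd rfl hus
    | cons u us =>
      cases ws with
      | nil =>
        cases us with
        | nil => simpa [joinZero] using heq
        | cons x us' =>
          exfalso
          rw [joinZero_cons] at heq
          simp only [joinZero] at heq
          exact hw w (by simp) (heq ▸ (by simp : (0:Fin 4) ∈ u ++ 0 :: joinZero (x :: us')))
      | cons y ws' =>
        cases us with
        | nil =>
          exfalso
          rw [joinZero_cons] at heq
          simp only [joinZero] at heq
          exact hu u (by simp) (heq ▸ (by simp : (0:Fin 4) ∈ w ++ 0 :: joinZero (y :: ws')))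
        | cons x us' =>
          rw [joinZero_cons, joinZero_cons] at heq
          obtain ⟨h1, h2⟩ := split_sep 0 _ _ _ _ (hw w (by simp)) (hu u (by simp)) heq
          have := ih (x :: us') (by simp) (by simp)
            (fun v hv => hw v (by simp [hv])) (fun v hv => hu v (by simp [hv])) h2
          rw [h1, this]

lemma eq_of_enc_forall {t : ℕ} (ws ws' : List (List (Fin 4)))
    (hlen : ws.length = t) (hlen' : ws'.length = t)
    (hws : ∀ w ∈ ws, ∀ a ∈ w, a = 1 ∨ a = 2)
    (hws' : ∀ w ∈ ws', ∀ a ∈ w, a = 1 ∨ a = 2)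
    (h : ∀ i < t, enc (ws.getD i []) = enc (ws'.getD i [])) : ws = ws' := by
  apply List.ext_getElem (by omega)
  intro i h1 h2
  have hi : i < t := by omega
  have := h i hi
  rw [List.getD_eq_getElem ws [] h1, List.getD_eq_getElem ws' [] h2] at this
  exact enc_inj _ _ (hws _ (List.getElem_mem h1)) (hws' _ (List.getElem_mem h2)) this

theorem stmt_16 (t : ℕ) (ht : 1 ≤ t)
    (ws ws' : List (List (Fin 4)))
    (hlen : ws.length = t) (hlen' : ws'.length = t)
    (hws : ∀ w ∈ ws, ∀ a ∈ w, a = 1 ∨ a = 2)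
    (hws' : ∀ w ∈ ws', ∀ a ∈ w, a = 1 ∨ a = 2) :
    (joinZero ws ++ [3] ++ joinZero ws'.reverse) ∈ MANYTWINS ↔
      ∀ i < t, enc (ws.getD i []) = enc (ws'.getD i []) := by
  constructor
  · rintro ⟨t', ht', us, hlus, hus, heq⟩
    have hwsne : ws ≠ [] := by intro h; rw [h] at hlen; simp at hlen; omega
    have husne : us ≠ [] := by intro h; rw [h] at hlus; simp at hlus; omega
    have hws'ne : ws'.reverse ≠ [] := by
      intro h; rw [List.reverse_eq_nil_iff] at h; rw [h] at hlen'; simp at hlen'; omega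
    have husrne : us.reverse ≠ [] := by
      intro h; rw [List.reverse_eq_nil_iff] at h; rw [h] at hlus; simp at hlus; omega
    have heq' : joinZero ws ++ 3 :: joinZero ws'.reverse
        = joinZero us ++ 3 :: joinZero us.reverse := by
      simpa [List.append_assoc] using heq
    obtain ⟨h1, h2⟩ := split_sep 3 _ _ _ _
      (three_not_mem_joinZero ws hws) (three_not_mem_joinZero us hus) heq'
    have e1 : ws = us := joinZero_inj ws us hwsne husne
      (fun w hw => zero_not_mem_of_12 (hws w hw))
      (fun w hw => zero_not_mem_of_12 (hus w hw)) h1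
    have e2 : ws'.reverse = us.reverse := joinZero_inj _ _ hws'ne husrne
      (fun w hw => zero_not_mem_of_12 (hws' w (List.mem_reverse.mp hw)))
      (fun w hw => zero_not_mem_of_12 (hus w (List.mem_reverse.mp hw))) h2
    have e3 : ws = ws' := by
      rw [e1]; exact (List.reverse_injective e2).symm
    intro i _
    rw [e3]
  · intro h
    have e : ws = ws' := eq_of_enc_forall ws ws' hlen hlen' hws hws' h
    exact ⟨t, ht, ws, hlen, hws, by rw [e]⟩
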